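/- (Theorem 1.1(i), Fujita exponent for the pure power equation, after Fujishima et al.) Consider problem (P) with h ≡ 1, l ≡ 0, f(u) = u^p and g ≡ 0, i.e. the equation u_t − div(ω(x)∇u) = u^p. If 1 < p ≤ 1 + (2−α)/N, then problem (P) has no nontrivial global solution: for every nonnegative u₀ ∈ C_b(ℝ^N) with u₀ ≢ 0 there is no global solution with initial data u₀. -/

import Mathlib

open MeasureTheory Real Set Metric Filter

noncomputable section

/-- `ℝ^N`. -/
abbrev EucN (N : ℕ) := EuclideanSpace ℝ (Fin N)

/-- `C_b(ℝ^N)`, the bounded continuous functions with the sup norm. -/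
abbrev CbN (N : ℕ) := BoundedContinuousFunction (EucN N) ℝ

lemma continuous_rpow_const' (p : ℝ) (hp : 0 ≤ p) : Continuous fun z : ℝ => z ^ p :=
  continuous_iff_continuousAt.mpr fun x => Real.continuousAt_rpow_const x p (Or.inr hp)

def powCb {N : ℕ} (f : CbN N) (p : ℝ) (hp : 0 ≤ p) (hf : ∀ x, 0 ≤ f x) : CbN N :=
  BoundedContinuousFunction.ofNormedAddCommGroup (fun x => f x ^ p)
    ((continuous_rpow_const' p hp).comp f.continuous) (‖f‖ ^ p)
    (fun x => by
      rw [Real.norm_eq_abs, abs_of_nonneg (Real.rpow_nonneg (hf x) p)]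
      exact Real.rpow_le_rpow (hf x)
        (le_trans (le_abs_self _) (by simpa [Real.norm_eq_abs] using f.norm_coe_le_norm x)) hp)

@[simp] lemma powCb_apply {N : ℕ} (f : CbN N) (p : ℝ) (hp : 0 ≤ p) (hf : ∀ x, 0 ≤ f x)
    (x : EucN N) : powCb f p hp hf x = f x ^ p := rfl

lemma my_integrable_of_integral_eq_one {X : Type*} [MeasurableSpace X] {μ : Measure X}
    {f : X → ℝ} (h : ∫ x, f x ∂μ = 1) : Integrable f μ := by
  by_contra hc; rw [integral_undef hc] at h; norm_num at h

lemma aux_growth (p c : ℝ) (hp : 1 < p) (hc : 0 < c) (d : ℕ → ℝ)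
    (h0 : ((2:ℝ)^(p/(p-1))/c)^((1:ℝ)/(p-1)) ≤ d 0)
    (hrec : ∀ k : ℕ, d (k+1) = c / 2^(k+1) * d k ^ p) :
    ∀ k : ℕ, ((2:ℝ)^(p/(p-1))/c)^((1:ℝ)/(p-1)) * ((2:ℝ)^((1:ℝ)/(p-1)))^k ≤ d k := by
  have hp1 : (0:ℝ) < p - 1 := by linarith
  set A : ℝ := (2:ℝ)^(p/(p-1)) with hA
  set G : ℝ := (A/c)^((1:ℝ)/(p-1)) with hG
  set H : ℝ := (2:ℝ)^((1:ℝ)/(p-1)) with hH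
  have hApos : 0 < A := Real.rpow_pos_of_pos two_pos _
  have hGpos : 0 < G := Real.rpow_pos_of_pos (div_pos hApos hc) _
  have hHpos : 0 < H := Real.rpow_pos_of_pos two_pos _
  have hGp : G ^ (p-1) = A / c := by
    rw [hG, ← Real.rpow_mul (div_pos hApos hc).le]
    rw [show (1:ℝ)/(p-1) * (p-1) = 1 by field_simp]
    exact Real.rpow_one _
  have hHk : ∀ m : ℕ, H ^ m = (2:ℝ) ^ ((m:ℝ)/(p-1)) := by
    intro m
    rw [hH, ← Real.rpow_natCast ((2:ℝ)^((1:ℝ)/(p-1))) m,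
      ← Real.rpow_mul (by norm_num : (0:ℝ) ≤ 2)]
    congr 1; ring
  have key : ∀ k : ℕ, c / 2^(k+1) * (G * H^k) ^ p = G * H^(k+1) := by
    intro k
    rw [Real.mul_rpow hGpos.le (pow_nonneg hHpos.le k)]
    have hGpow : G ^ p = G * (A/c) := by
      have h1 : G ^ p = G ^ (1 + (p-1)) := by norm_num
      rw [h1, Real.rpow_add hGpos, Real.rpow_one, hGp]
    have hHkp : (H^k) ^ p = (2:ℝ) ^ ((k:ℝ)*p/(p-1)) := by
      rw [hHk k, ← Real.rpow_mul (by norm_num : (0:ℝ) ≤ 2)]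
      congr 1; ring
    rw [hGpow, hHkp, hHk (k+1), hA, ← Real.rpow_natCast 2 (k+1)]
    push_cast
    have h2 : (0:ℝ) < 2 := two_pos
    have hne : (2:ℝ) ^ ((k:ℝ)+1) ≠ 0 := (Real.rpow_pos_of_pos h2 _).ne'
    rw [div_mul_eq_mul_div, div_eq_iff hne]
    have e1 : c * (G * ((2:ℝ)^(p/(p-1))/c) * (2:ℝ)^((k:ℝ)*p/(p-1)))
        = G * ((2:ℝ)^(p/(p-1)) * (2:ℝ)^((k:ℝ)*p/(p-1))) := by
      field_simp
    rw [e1, ← Real.rpow_add h2, mul_assoc, ← Real.rpow_add h2]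
    congr 1
    field_simp
    ring
  intro k
  induction k with
  | zero => simpa using h0
  | succ k ih =>
    rw [hrec k, ← key k]
    have h1 : (G*H^k)^p ≤ d k ^ p :=
      Real.rpow_le_rpow (by positivity) ih (by linarith)
    have h2 : (0:ℝ) < c / 2^(k+1) := by positivity
    exact mul_le_mul_of_nonneg_left h1 h2.le

/-- `u` is a global (mild) solution of problem (P)
`u_t - div(ω(x)∇u) = h(t) f(u) + l(t) g(u)`, `u(0) = u₀`, i.e.
`u ∈ C([0,∞), C_b(ℝ^N))`, `u ≥ 0`, and
`u(t) = S(t)u₀ + ∫_0^t S(t-σ)[h(σ) f(u(σ)) + l(σ) g(u(σ))] dσ` for all `t ≥ 0`,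
written pointwise via the kernel `Γ`. -/
def IsGlobalSolution (N : ℕ) (Γ : EucN N → EucN N → ℝ → ℝ)
    (h l f g : ℝ → ℝ) (u₀ : CbN N) (u : ℝ → CbN N) : Prop :=
  ContinuousOn u (Ici (0 : ℝ)) ∧ u 0 = u₀ ∧
    (∀ t : ℝ, 0 ≤ t → ∀ x, 0 ≤ u t x) ∧
    ∀ t : ℝ, 0 < t → ∀ x,
      u t x = (∫ y, Γ x y t * u₀ y) +
        ∫ σ in (0 : ℝ)..t, ∫ y, Γ x y (t - σ) *
          (h σ * f (u σ y) + l σ * g (u σ y))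

set_option maxHeartbeats 2000000 in
/-- Theorem 1.1(i) (after Fujishima et al.): for `u_t - div(ω∇u) = u^p` with
`1 < p ≤ 1 + (2-α)/N`, there is no nontrivial global solution. -/
theorem fujita_nonexistence_pure_power
    (N : ℕ) (hN : 1 ≤ N) (α : ℝ) (hα0 : 0 ≤ α) (hα1 : α < 1)
    (Γ : EucN N → EucN N → ℝ → ℝ)
    (hΓmeas : Measurable fun p : EucN N × EucN N × ℝ => Γ p.1 p.2.1 p.2.2)
    (c₀ : ℝ) (hc₀ : 0 < c₀)
    (hK1y : ∀ (x : EucN N) (t : ℝ), 0 < t → ∫ y, Γ x y t = 1)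
    (hK1x : ∀ (y : EucN N) (t : ℝ), 0 < t → ∫ x, Γ x y t = 1)
    (hK2 : ∀ (x y : EucN N) (s t : ℝ), 0 < s → s < t →
      Γ x y t = ∫ ξ, Γ x ξ (t - s) * Γ ξ y s)
    (hK5 : ∀ (x y : EucN N) (t : ℝ), 0 < t →
      0 < Γ x y t ∧ Γ x y t ≤ c₀ * t ^ (-(N : ℝ) / (2 - α)))
    (S : ℝ → CbN N → CbN N)
    (hS0 : ∀ φ, S 0 φ = φ)
    (hSΓ : ∀ (φ : CbN N) (t : ℝ), 0 < t → ∀ x, S t φ x = ∫ y, Γ x y t * φ y)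
    (hK4 : ∀ φ : CbN N, ContinuousOn (fun t => S t φ) (Ici (0 : ℝ)))
    -- kernel lower bound (Lemma 2.3):
    (CαN : ℝ) (hCαN : 0 < CαN)
    (hLower : ∀ φ : CbN N, (∀ x, 0 ≤ φ x) → ∀ t > (0 : ℝ), ∀ x : EucN N,
      ‖x‖ ≤ t ^ ((1 : ℝ) / (2 - α)) →
      CαN⁻¹ * t ^ (-(N : ℝ) / (2 - α)) *
        (∫ y in closedBall (0 : EucN N) (t ^ ((1 : ℝ) / (2 - α))), φ y)
        ≤ S t φ x)
    -- mass non-escape estimate ((2.11)–(2.12) of Fujishima et al.):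
    (C₀ : ℝ) (hC₀ : 0 < C₀)
    (hMass : ∀ t > (0 : ℝ), ∀ y : EucN N, ‖y‖ ≤ t ^ ((1 : ℝ) / (2 - α)) →
      C₀ ≤ ∫ x in closedBall (0 : EucN N) (t ^ ((1 : ℝ) / (2 - α))), Γ x y t)
    (p : ℝ) (hp1 : 1 < p) (hpcrit : p ≤ 1 + (2 - α) / N) :
    ∀ u₀ : CbN N, (∀ x, 0 ≤ u₀ x) → u₀ ≠ 0 →
      ¬ ∃ u : ℝ → CbN N,
        IsGlobalSolution N Γ (fun _ => 1) (fun _ => 0) (fun z => z ^ p)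
          (fun _ => 0) u₀ u := by
  intro u₀ hu₀nn hu₀ne hEx
  obtain ⟨u, hsol⟩ := hEx
  simp only [IsGlobalSolution] at hsol
  obtain ⟨huc, hu0, hunn, hDuh⟩ := hsol
  -- basic numerology
  have h2α : (0:ℝ) < 2 - α := by linarith
  have hNpos : (0:ℝ) < N := by exact_mod_cast Nat.lt_of_lt_of_le Nat.zero_lt_one hN
  have hp0 : (0:ℝ) ≤ p := by linarith
  set a : ℝ := (N:ℝ) / (2 - α) with ha_def
  have ha : 0 < a := div_pos hNpos h2α
  have haneg : -(N:ℝ)/(2-α) = -a := by rw [neg_div]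
  have hap1 : a * (p - 1) ≤ 1 := by
    have h1 : p - 1 ≤ (2-α)/N := by linarith
    have h2 : a * ((2-α)/(N:ℝ)) = 1 := by rw [ha_def]; field_simp
    calc a * (p-1) ≤ a * ((2-α)/N) := by
          apply mul_le_mul_of_nonneg_left h1 ha.le
      _ = 1 := h2
  have hainv : a ≤ 1/(p-1) := by
    rw [le_div_iff₀ (by linarith : (0:ℝ) < p - 1)]
    exact hap1
  have hr_mono : ∀ {s t : ℝ}, 0 ≤ s → s ≤ t →
      s ^ ((1:ℝ)/(2-α)) ≤ t ^ ((1:ℝ)/(2-α)) :=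
    fun hs hst => Real.rpow_le_rpow hs hst (by positivity)
  -- volume of balls
  set v₁ : ℝ := (volume (ball (0:EucN N) 1)).toReal with hv₁_def
  have hv₁ : 0 < v₁ := by
    apply ENNReal.toReal_pos (measure_ball_pos volume 0 one_pos).ne'
    exact measure_ball_lt_top.ne
  have hvol : ∀ β : ℝ, 0 < β →
      (volume (closedBall (0:EucN N) (β ^ ((1:ℝ)/(2-α))))).toReal = β ^ a * v₁ := by
    intro β hβ
    have hρ : (0:ℝ) ≤ β ^ ((1:ℝ)/(2-α)) := Real.rpow_nonneg hβ.le _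
    rw [Measure.addHaar_closedBall _ _ hρ, ENNReal.toReal_mul,
      ENNReal.toReal_ofReal (by positivity), finrank_euclideanSpace_fin]
    congr 1
    rw [← Real.rpow_natCast (β ^ ((1:ℝ)/(2-α))) N, ← Real.rpow_mul hβ.le]
    congr 1
    rw [ha_def]; field_simp
  -- kernel integrability & positivity
  have hΓpos : ∀ x y t, 0 < t → 0 < Γ x y t := fun x y t ht => (hK5 x y t ht).1
  have hΓint : ∀ (x : EucN N) (t : ℝ), 0 < t → Integrable (fun y => Γ x y t) :=
    fun x t ht => my_integrable_of_integral_eq_one (hK1y x t ht)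
  -- joint continuity of u-evaluation
  have hueval : ContinuousOn (fun q : ℝ × EucN N => u q.1 q.2) (Ici (0:ℝ) ×ˢ univ) := by
    have h1 : ContinuousOn (fun q : ℝ × EucN N => (u q.1, q.2)) (Ici (0:ℝ) ×ˢ univ) :=
      (huc.comp continuousOn_fst (fun q hq => hq.1)).prodMk continuous_snd.continuousOn
    exact ContinuousEval.continuous_eval.comp_continuousOn h1
  -- a.e. membership
  have haeIoo : ∀ τ : ℝ, ∀ᵐ σ ∂(volume.restrict (Ioc (0:ℝ) τ)), σ ∈ Ioo 0 τ := by
    intro τ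
    have h1 : ∀ᵐ σ ∂(volume.restrict (Ioc (0:ℝ) τ)), σ ∈ Ioc 0 τ :=
      ae_restrict_mem measurableSet_Ioc
    have h2 : (volume.restrict (Ioc (0:ℝ) τ)) {τ} = 0 :=
      le_antisymm (le_trans (Measure.restrict_le_self _) (by simp)) (zero_le)
    have h2' : ∀ᵐ σ ∂(volume.restrict (Ioc (0:ℝ) τ)), σ ≠ τ := by
      rw [ae_iff]
      convert h2 using 2
      ext σ; simp
    filter_upwards [h1, h2'] with σ hσ hne
    exact ⟨hσ.1, lt_of_le_of_ne hσ.2 hne⟩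
  -- Duhamel, simplified
  have hDuh' : ∀ τ : ℝ, 0 < τ → ∀ x : EucN N,
      u τ x = (∫ y, Γ x y τ * u₀ y) +
        ∫ σ in (0:ℝ)..τ, ∫ y, Γ x y (τ - σ) * u σ y ^ p := by
    intro τ hτ x
    simpa using hDuh τ hτ x
  -- integrability and nonnegativity of the Duhamel integrand
  have hFcore : ∀ (x : EucN N) (τ : ℝ), 0 < τ →
      IntegrableOn (fun σ => ∫ y, Γ x y (τ - σ) * u σ y ^ p) (Ioc 0 τ) ∧
      (∀ σ ∈ Ioo (0:ℝ) τ, 0 ≤ ∫ y, Γ x y (τ - σ) * u σ y ^ p) := by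
    intro x τ hτ
    have hmeasF : AEStronglyMeasurable (fun σ => ∫ y, Γ x y (τ - σ) * u σ y ^ p)
        (volume.restrict (Ioc 0 τ)) := by
      have hprod : AEStronglyMeasurable (fun q : ℝ × EucN N => Γ x q.2 (τ - q.1) * u q.1 q.2 ^ p)
          ((volume.restrict (Ioc (0:ℝ) τ)).prod volume) := by
        have hg1 : Measurable (fun q : ℝ × EucN N => Γ x q.2 (τ - q.1)) :=
          hΓmeas.comp (measurable_const.prodMk
            (measurable_snd.prodMk (measurable_const.sub measurable_fst)))
        have hg2 : AEStronglyMeasurable (fun q : ℝ × EucN N => u q.1 q.2 ^ p)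
            ((volume.restrict (Ioc (0:ℝ) τ)).prod volume) := by
          rw [← Measure.restrict_univ (μ := (volume : Measure (EucN N))),
            Measure.prod_restrict]
          refine ContinuousOn.aestronglyMeasurable ?_ (measurableSet_Ioc.prod MeasurableSet.univ)
          refine (continuous_rpow_const' p hp0).comp_continuousOn ?_
          exact hueval.mono (Set.prod_mono (fun z hz => hz.1.le) subset_rfl)
        exact hg1.aestronglyMeasurable.mul hg2
      exact hprod.integral_prod_right'
    obtain ⟨M, hM⟩ := (isCompact_Icc : IsCompact (Icc (0:ℝ) τ)).exists_bound_of_continuousOn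
      (huc.mono (fun z hz => hz.1))
    have hptbd : ∀ σ ∈ Ioo (0:ℝ) τ,
        (0 ≤ ∫ y, Γ x y (τ - σ) * u σ y ^ p) ∧
        (∫ y, Γ x y (τ - σ) * u σ y ^ p) ≤ M ^ p := by
      intro σ hσ
      have hts : 0 < τ - σ := by linarith [hσ.2]
      have hint := hΓint x (τ - σ) hts
      constructor
      · exact integral_nonneg fun y =>
          mul_nonneg (hΓpos x y _ hts).le (Real.rpow_nonneg (hunn σ hσ.1.le y) p)
      · have hb : ∀ y, Γ x y (τ - σ) * u σ y ^ p ≤ Γ x y (τ - σ) * M ^ p := by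
          intro y
          apply mul_le_mul_of_nonneg_left _ (hΓpos x y _ hts).le
          refine Real.rpow_le_rpow (hunn σ hσ.1.le y) ?_ hp0
          calc u σ y ≤ ‖u σ y‖ := le_abs_self _
            _ ≤ ‖u σ‖ := (u σ).norm_coe_le_norm y
            _ ≤ M := hM σ ⟨hσ.1.le, hσ.2.le⟩
        calc (∫ y, Γ x y (τ - σ) * u σ y ^ p) ≤ ∫ y, Γ x y (τ - σ) * M ^ p := by
              refine integral_mono_of_nonneg (Filter.Eventually.of_forall fun y =>
                mul_nonneg (hΓpos x y _ hts).le (Real.rpow_nonneg (hunn σ hσ.1.le y) p))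
                (hint.mul_const _) (Filter.Eventually.of_forall hb)
          _ = M ^ p := by rw [integral_mul_const, hK1y x _ hts, one_mul]
    refine ⟨Integrable.mono' (integrableOn_const (C := M ^ p) measure_Ioc_lt_top.ne) hmeasF ?_,
      fun σ hσ => (hptbd σ hσ).1⟩
    filter_upwards [haeIoo τ] with σ hσ
    rw [Real.norm_eq_abs, abs_of_nonneg (hptbd σ hσ).1]
    exact (hptbd σ hσ).2
  -- generic lower bound through the Duhamel formula
  have hstep : ∀ (x : EucN N) (τ b₁ b₂ : ℝ), 0 < τ → 0 < b₁ → b₁ ≤ b₂ → b₂ < τ →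
      ∀ g : ℝ → ℝ, IntegrableOn g (Ioc b₁ b₂) →
      (∀ σ ∈ Ioc b₁ b₂, g σ ≤ ∫ y, Γ x y (τ - σ) * u σ y ^ p) →
      (∫ σ in Ioc b₁ b₂, g σ) ≤ u τ x := by
    intro x τ b₁ b₂ hτ hb₁ hb12 hb2τ g hg hgF
    obtain ⟨hFint, hFnn⟩ := hFcore x τ hτ
    have hsub : Ioc b₁ b₂ ⊆ Ioc 0 τ := Ioc_subset_Ioc hb₁.le hb2τ.le
    have hFae : 0 ≤ᵐ[volume.restrict (Ioc (0:ℝ) τ)]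
        (fun σ => ∫ y, Γ x y (τ - σ) * u σ y ^ p) := by
      filter_upwards [haeIoo τ] with σ hσ using hFnn σ hσ
    calc ∫ σ in Ioc b₁ b₂, g σ
        ≤ ∫ σ in Ioc b₁ b₂, ∫ y, Γ x y (τ - σ) * u σ y ^ p :=
          setIntegral_mono_on hg (hFint.mono_set hsub) measurableSet_Ioc hgF
      _ ≤ ∫ σ in Ioc 0 τ, ∫ y, Γ x y (τ - σ) * u σ y ^ p :=
          setIntegral_mono_set hFint hFae hsub.eventuallyLE
      _ = ∫ σ in (0:ℝ)..τ, ∫ y, Γ x y (τ - σ) * u σ y ^ p :=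
          (intervalIntegral.integral_of_le hτ.le).symm
      _ ≤ u τ x := by
          rw [hDuh' τ hτ x]
          have hA : 0 ≤ ∫ y, Γ x y τ * u₀ y :=
            integral_nonneg fun y => mul_nonneg (hΓpos x y τ hτ).le (hu₀nn y)
          linarith
  -- pointwise kernel lower bound
  have hFlow : ∀ (x : EucN N) (τ σ β R e : ℝ), 0 ≤ σ → σ < τ → 0 < β → β ≤ τ - σ →
      τ - σ ≤ R → 0 ≤ e → ‖x‖ ≤ (τ - σ) ^ ((1:ℝ)/(2-α)) →
      (∀ y : EucN N, ‖y‖ ≤ β ^ ((1:ℝ)/(2-α)) → e ≤ u σ y) →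
      CαN⁻¹ * R ^ (-a) * (v₁ * (β ^ a * e ^ p)) ≤ ∫ y, Γ x y (τ - σ) * u σ y ^ p := by
    intro x τ σ β R e hσ0 hστ hβ hβρ hρR he hx hbd
    have hρ0 : 0 < τ - σ := lt_of_lt_of_le hβ hβρ
    have hR0 : 0 < R := lt_of_lt_of_le hρ0 hρR
    set φ : CbN N := powCb (u σ) p hp0 (hunn σ hσ0) with hφ_def
    have hφnn : ∀ y, 0 ≤ φ y := fun y => Real.rpow_nonneg (hunn σ hσ0 y) p
    have hSeq : S (τ - σ) φ x = ∫ y, Γ x y (τ - σ) * u σ y ^ p := by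
      rw [hSΓ φ (τ - σ) hρ0 x]
      rfl
    have hL := hLower φ hφnn (τ - σ) hρ0 x hx
    rw [haneg] at hL
    have hφcont : Continuous (fun y : EucN N => φ y) := φ.continuous
    have hφint : IntegrableOn (fun y => φ y)
        (closedBall (0:EucN N) ((τ - σ) ^ ((1:ℝ)/(2-α)))) :=
      ContinuousOn.integrableOn_compact (isCompact_closedBall _ _) hφcont.continuousOn
    have hsubB : closedBall (0:EucN N) (β ^ ((1:ℝ)/(2-α))) ⊆
        closedBall 0 ((τ - σ) ^ ((1:ℝ)/(2-α))) :=
      closedBall_subset_closedBall (hr_mono hβ.le hβρ)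
    have h1 : (∫ y in closedBall (0:EucN N) (β ^ ((1:ℝ)/(2-α))), φ y) ≤
        ∫ y in closedBall (0:EucN N) ((τ - σ) ^ ((1:ℝ)/(2-α))), φ y :=
      setIntegral_mono_set hφint (Filter.Eventually.of_forall hφnn) hsubB.eventuallyLE
    have h2 : e ^ p * (β ^ a * v₁) ≤ ∫ y in closedBall (0:EucN N) (β ^ ((1:ℝ)/(2-α))), φ y := by
      have hci : IntegrableOn (fun _ : EucN N => e ^ p)
          (closedBall 0 (β ^ ((1:ℝ)/(2-α)))) :=
        integrableOn_const (C := e ^ p) measure_closedBall_lt_top.ne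
      have hmono := setIntegral_mono_on hci (hφint.mono_set hsubB) measurableSet_closedBall
        (fun y hy => by
          show e ^ p ≤ u σ y ^ p
          exact Real.rpow_le_rpow he (hbd y (mem_closedBall_zero_iff.1 hy)) hp0)
      rw [setIntegral_const, measureReal_def, hvol β hβ, smul_eq_mul] at hmono
      calc e ^ p * (β ^ a * v₁) = β ^ a * v₁ * e ^ p := by ring
        _ ≤ _ := hmono
    have h3 : CαN⁻¹ * R ^ (-a) * (v₁ * (β ^ a * e ^ p)) ≤
        CαN⁻¹ * (τ - σ) ^ (-a) * (v₁ * (β ^ a * e ^ p)) := by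
      have hrr : R ^ (-a) ≤ (τ - σ) ^ (-a) :=
        Real.rpow_le_rpow_of_nonpos hρ0 hρR (by linarith)
      have hnn : (0:ℝ) ≤ v₁ * (β ^ a * e ^ p) := by
        have := Real.rpow_nonneg he p
        have := Real.rpow_nonneg hβ.le a
        positivity
      have := mul_le_mul_of_nonneg_right (mul_le_mul_of_nonneg_left hrr
        (by positivity : (0:ℝ) ≤ CαN⁻¹)) hnn
      linarith
    have h4 : CαN⁻¹ * (τ - σ) ^ (-a) * (v₁ * (β ^ a * e ^ p)) ≤
        CαN⁻¹ * (τ - σ) ^ (-a) *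
          ∫ y in closedBall (0:EucN N) ((τ - σ) ^ ((1:ℝ)/(2-α))), φ y := by
      have hc : (0:ℝ) ≤ CαN⁻¹ * (τ - σ) ^ (-a) := by positivity
      refine mul_le_mul_of_nonneg_left ?_ hc
      calc v₁ * (β ^ a * e ^ p) = e ^ p * (β ^ a * v₁) := by ring
        _ ≤ ∫ y in closedBall (0:EucN N) (β ^ ((1:ℝ)/(2-α))), φ y := h2
        _ ≤ _ := h1
    calc CαN⁻¹ * R ^ (-a) * (v₁ * (β ^ a * e ^ p))
        ≤ CαN⁻¹ * (τ - σ) ^ (-a) *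
          ∫ y in closedBall (0:EucN N) ((τ - σ) ^ ((1:ℝ)/(2-α))), φ y := le_trans h3 h4
      _ ≤ S (τ - σ) φ x := hL
      _ = _ := hSeq
  -- initial mass
  obtain ⟨T₀, m₀, hT₀1, hm₀, hmball⟩ :
      ∃ T₀ m₀ : ℝ, 1 ≤ T₀ ∧ 0 < m₀ ∧
        ∀ s : ℝ, T₀ ≤ s → m₀ ≤ ∫ y in closedBall (0:EucN N) (s ^ ((1:ℝ)/(2-α))), u₀ y := by
    have hx₀ : ∃ x₀ : EucN N, u₀ x₀ ≠ 0 := by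
      by_contra hcon
      push_neg at hcon
      exact hu₀ne (by ext z; simpa using hcon z)
    obtain ⟨x₀, hx₀⟩ := hx₀
    have hx₀pos : 0 < u₀ x₀ := lt_of_le_of_ne (hu₀nn x₀) (Ne.symm hx₀)
    have hopen : IsOpen (u₀ ⁻¹' Ioi (u₀ x₀ / 2)) := isOpen_Ioi.preimage u₀.continuous
    have hx₀mem : x₀ ∈ u₀ ⁻¹' Ioi (u₀ x₀ / 2) := by
      simp only [mem_preimage, mem_Ioi]; linarith
    obtain ⟨ε, hε, hball⟩ := Metric.isOpen_iff.1 hopen x₀ hx₀mem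
    set m₀ : ℝ := ∫ y in closedBall x₀ (ε/2), u₀ y with hm₀_def
    have hu₀int : ∀ s : Set (EucN N), IsCompact s → IntegrableOn (fun y => u₀ y) s :=
      fun s hs => ContinuousOn.integrableOn_compact hs u₀.continuous.continuousOn
    have hm₀pos : 0 < m₀ := by
      have hconst : IntegrableOn (fun _ : EucN N => u₀ x₀ / 2) (closedBall x₀ (ε/2)) :=
        integrableOn_const (C := u₀ x₀ / 2) measure_closedBall_lt_top.ne
      have hle := setIntegral_mono_on hconst (hu₀int _ (isCompact_closedBall _ _))
        measurableSet_closedBall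
        (fun y hy => by
          have : y ∈ u₀ ⁻¹' Ioi (u₀ x₀ / 2) := hball
            (lt_of_le_of_lt (mem_closedBall.1 hy) (by linarith))
          exact (mem_Ioi.1 this).le)
      rw [setIntegral_const, measureReal_def, smul_eq_mul] at hle
      have hvpos : 0 < (volume (closedBall x₀ (ε/2))).toReal :=
        ENNReal.toReal_pos (measure_closedBall_pos volume x₀ (by linarith)).ne'
          measure_closedBall_lt_top.ne
      have : 0 < (volume (closedBall x₀ (ε/2))).toReal * (u₀ x₀ / 2) := by positivity
      linarith
    refine ⟨max 1 ((‖x₀‖ + ε) ^ (2-α)), m₀, le_max_left _ _, hm₀pos, ?_⟩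
    intro s hs
    have hsm : ‖x₀‖ + ε ≤ s ^ ((1:ℝ)/(2-α)) := by
      have h0 : (0:ℝ) ≤ ‖x₀‖ + ε := by positivity
      have h1 : ((‖x₀‖ + ε) ^ (2-α)) ^ ((1:ℝ)/(2-α)) = ‖x₀‖ + ε := by
        rw [← Real.rpow_mul h0, mul_one_div, div_self h2α.ne', Real.rpow_one]
      calc ‖x₀‖ + ε = ((‖x₀‖ + ε) ^ (2-α)) ^ ((1:ℝ)/(2-α)) := h1.symm
        _ ≤ s ^ ((1:ℝ)/(2-α)) :=
          hr_mono (Real.rpow_nonneg h0 _) (le_trans (le_max_right _ _) hs)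
    refine setIntegral_mono_set (hu₀int _ (isCompact_closedBall _ _))
      (Filter.Eventually.of_forall hu₀nn) (HasSubset.Subset.eventuallyLE ?_)
    refine closedBall_subset_closedBall' ?_
    rw [dist_zero_right]
    linarith
  have hT₀pos : (0:ℝ) < T₀ := lt_of_lt_of_le one_pos hT₀1
  -- step 1
  have hstep1 : ∀ σ : ℝ, T₀ ≤ σ → ∀ y : EucN N, ‖y‖ ≤ σ ^ ((1:ℝ)/(2-α)) →
      CαN⁻¹ * σ ^ (-a) * m₀ ≤ u σ y := by
    intro σ hσ y hy
    have hσ0 : 0 < σ := lt_of_lt_of_le hT₀pos hσ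
    have h1 : S σ u₀ y ≤ u σ y := by
      rw [hDuh' σ hσ0 y, hSΓ u₀ σ hσ0 y]
      have h2 : 0 ≤ ∫ ς in (0:ℝ)..σ, ∫ z, Γ y z (σ - ς) * u ς z ^ p := by
        rw [intervalIntegral.integral_of_le hσ0.le, integral_Ioc_eq_integral_Ioo]
        exact setIntegral_nonneg measurableSet_Ioo (fun ς hς => (hFcore y σ hσ0).2 ς hς)
      linarith
    have h3 := hLower u₀ hu₀nn σ hσ0 y hy
    rw [haneg] at h3
    have h4 : m₀ ≤ ∫ z in closedBall (0:EucN N) (σ ^ ((1:ℝ)/(2-α))), u₀ z := hmball σ hσ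
    calc CαN⁻¹ * σ ^ (-a) * m₀
        ≤ CαN⁻¹ * σ ^ (-a) * ∫ z in closedBall (0:EucN N) (σ ^ ((1:ℝ)/(2-α))), u₀ z :=
          mul_le_mul_of_nonneg_left h4 (by positivity)
      _ ≤ S σ u₀ y := h3
      _ ≤ u σ y := h1
  -- step 2 (log improvement)
  set K₁ : ℝ := CαN⁻¹ * 2 ^ (-a) * v₁ * (CαN⁻¹ * m₀) ^ p with hK₁_def
  have hK₁pos : 0 < K₁ := by
    have : (0:ℝ) < (CαN⁻¹ * m₀) ^ p := Real.rpow_pos_of_pos (by positivity) _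
    positivity
  have hstep2 : ∀ t : ℝ, T₀ ≤ t → ∀ x : EucN N, ‖x‖ ≤ t ^ ((1:ℝ)/(2-α)) →
      K₁ * t ^ (-a) * Real.log (t / T₀) ≤ u (2*t) x := by
    intro t ht x hx
    have ht0 : 0 < t := lt_of_lt_of_le hT₀pos ht
    have h2t : (0:ℝ) < 2*t := by linarith
    have hgint : IntegrableOn (fun σ => K₁ * t^(-a) * σ⁻¹) (Ioc T₀ t) := by
      have hc : ContinuousOn (fun σ : ℝ => K₁ * t^(-a) * σ⁻¹) (Icc T₀ t) :=
        continuousOn_const.mul (ContinuousOn.inv₀ continuousOn_id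
          (fun z hz => ne_of_gt (lt_of_lt_of_le hT₀pos hz.1)))
      exact (hc.integrableOn_compact isCompact_Icc).mono_set Ioc_subset_Icc_self
    have hbound : ∀ σ ∈ Ioc T₀ t,
        K₁ * t^(-a) * σ⁻¹ ≤ ∫ y, Γ x y (2*t - σ) * u σ y ^ p := by
      intro σ hσ
      have hσ0 : 0 < σ := lt_trans hT₀pos hσ.1
      have hσ1 : (1:ℝ) ≤ σ := le_trans hT₀1 hσ.1.le
      have hepos : (0:ℝ) ≤ CαN⁻¹ * σ^(-a) * m₀ := by positivity
      have hflow := hFlow x (2*t) σ σ (2*t) (CαN⁻¹ * σ^(-a) * m₀) hσ0.le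
        (by linarith [hσ.2]) hσ0 (by linarith [hσ.2]) (by linarith) hepos
        (le_trans hx (hr_mono ht0.le (by linarith [hσ.2])))
        (fun y hy => hstep1 σ hσ.1.le y hy)
      refine le_trans ?_ hflow
      have e2 : (CαN⁻¹ * σ^(-a) * m₀)^p = (CαN⁻¹*m₀)^p * σ^((-a)*p) := by
        rw [show CαN⁻¹ * σ^(-a) * m₀ = (CαN⁻¹*m₀) * σ^(-a) by ring,
          Real.mul_rpow (by positivity) (Real.rpow_nonneg hσ0.le _),
          ← Real.rpow_mul hσ0.le]
      have e3 : σ^a * ((CαN⁻¹ * σ^(-a) * m₀)^p) = (CαN⁻¹*m₀)^p * σ^(a*(1-p)) := by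
        rw [e2, show a*(1-p) = a + (-a)*p by ring, Real.rpow_add hσ0]; ring
      have e4 : (2*t)^(-a) = 2^(-a) * t^(-a) := Real.mul_rpow (by norm_num) ht0.le
      have e5 : CαN⁻¹ * (2*t) ^ (-a) * (v₁ * (σ ^ a * (CαN⁻¹ * σ^(-a) * m₀) ^ p))
          = K₁ * t^(-a) * σ^(a*(1-p)) := by
        rw [e3, e4, hK₁_def]; ring
      rw [e5]
      have e6 : σ⁻¹ = σ ^ (-(1:ℝ)) := (Real.rpow_neg_one σ).symm
      rw [e6]
      refine mul_le_mul_of_nonneg_left ?_ (by positivity)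
      refine Real.rpow_le_rpow_of_exponent_le hσ1 ?_
      nlinarith [hap1]
    have hkey := hstep x (2*t) T₀ t h2t hT₀pos ht (by linarith) (fun σ => K₁ * t^(-a) * σ⁻¹) hgint hbound
    have hIoc : ∫ σ in Ioc T₀ t, K₁ * t^(-a) * σ⁻¹ = K₁ * t^(-a) * Real.log (t/T₀) := by
      rw [← intervalIntegral.integral_of_le ht, intervalIntegral.integral_const_mul,
        integral_inv]
      rw [Set.uIcc_of_le ht]
      intro h
      exact absurd h.1 (not_le.2 hT₀pos)
    rw [hIoc] at hkey
    exact hkey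
  -- the iteration
  set κ₀ : ℝ := CαN⁻¹ * 2 ^ (-a) * v₁ with hκ₀_def
  have hκ₀pos : 0 < κ₀ := by positivity
  set Λ₀ : ℝ := ((2:ℝ)^(p/(p-1))/κ₀) ^ ((1:ℝ)/(p-1)) with hΛ₀_def
  have hΛ₀pos : 0 < Λ₀ :=
    Real.rpow_pos_of_pos (div_pos (Real.rpow_pos_of_pos two_pos _) hκ₀pos) _
  set C : ℝ := max 1 (Λ₀ * K₁⁻¹ * 4 ^ a) with hC_def
  have hC1 : (1:ℝ) ≤ C := le_max_left _ _
  have hC0 : (0:ℝ) < C := lt_of_lt_of_le one_pos hC1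
  have hCΛ : Λ₀ * K₁⁻¹ * 4 ^ a ≤ C := le_max_right _ _
  set T : ℝ := T₀ * Real.exp C with hT_def
  have hexp1 : (1:ℝ) ≤ Real.exp C := by
    rw [← Real.exp_zero]; exact Real.exp_le_exp.2 (by linarith)
  have hTpos : 0 < T := by positivity
  have hT1 : (1:ℝ) ≤ T := by nlinarith
  have hTT₀ : T₀ ≤ T := by nlinarith
  have hlogT : Real.log (T / T₀) = C := by
    rw [hT_def, mul_comm, mul_div_assoc, div_self hT₀pos.ne', mul_one, Real.log_exp]
  set d₀ : ℝ := K₁ * (4*T) ^ (-a) * C with hd₀_def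
  have hd₀pos : 0 < d₀ := by positivity
  set d : ℕ → ℝ := fun k => Nat.rec d₀ (fun k ih => κ₀ * (T / 2^(k+1)) * ih ^ p) k with hd_def
  have hd0 : d 0 = d₀ := rfl
  have hdsucc : ∀ k : ℕ, d (k+1) = κ₀ * (T / 2^(k+1)) * d k ^ p := fun k => rfl
  have hdpos : ∀ k, 0 < d k := by
    intro k; induction k with
    | zero => rw [hd0]; exact hd₀pos
    | succ k ih =>
      rw [hdsucc]
      have := Real.rpow_pos_of_pos ih p
      positivity
  -- main induction
  have main : ∀ k : ℕ, ∀ σ : ℝ, σ ∈ Icc (4*T - 2*T/2^k) (7*T) → ∀ x : EucN N,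
      ‖x‖ ≤ (T/2^k) ^ ((1:ℝ)/(2-α)) → d k ≤ u σ x := by
    intro k
    induction k with
    | zero =>
      intro σ hσ x hx
      simp only [pow_zero, div_one] at hσ hx
      have hσ1 : 2*T ≤ σ := by linarith [hσ.1]
      have ht' : T ≤ σ/2 := by linarith
      have ht'' : T₀ ≤ σ/2 := le_trans hTT₀ ht'
      have hσ2pos : (0:ℝ) < σ/2 := by linarith
      have hb := hstep2 (σ/2) ht'' x (le_trans hx (hr_mono hTpos.le ht'))
      rw [show 2*(σ/2) = σ by ring] at hb
      refine le_trans ?_ hb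
      rw [hd0, hd₀_def]
      have hx1 : (4*T)^(-a) ≤ (σ/2)^(-a) :=
        Real.rpow_le_rpow_of_nonpos hσ2pos (by linarith [hσ.2]) (by linarith)
      have h2 : C ≤ Real.log (σ/2/T₀) := by
        rw [← hlogT]
        apply Real.log_le_log (div_pos hTpos hT₀pos)
        exact (div_le_div_iff_of_pos_right hT₀pos).2 ht'
      calc K₁ * (4*T)^(-a) * C ≤ K₁ * ((σ/2)^(-a)) * C := by
            exact mul_le_mul_of_nonneg_right
              (mul_le_mul_of_nonneg_left hx1 hK₁pos.le) hC0.le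
        _ ≤ K₁ * ((σ/2)^(-a)) * Real.log (σ/2/T₀) :=
            mul_le_mul_of_nonneg_left h2 (by positivity)
    | succ k ih =>
      intro σ hσ x hx
      set δ : ℝ := T / 2^(k+1) with hδ_def
      have hδpos : 0 < δ := by positivity
      have hpk : (0:ℝ) < 2^k := by positivity
      have hkey : 2*δ = T/2^k := by
        rw [hδ_def, pow_succ]; field_simp
      have h1pk : (1:ℝ) ≤ 2^k := one_le_pow₀ one_le_two
      have h1pk1 : (1:ℝ) ≤ 2^(k+1) := one_le_pow₀ one_le_two
      have hd2T : 2*T/2^(k+1) ≤ 2*T := div_le_self (by linarith) h1pk1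
      have hd2T' : 2*T/2^k ≤ 2*T := div_le_self (by linarith) h1pk
      have hσlow : 4*T - 2*T/2^(k+1) ≤ σ := hσ.1
      have hσpos : 0 < σ := by linarith
      have hs2 : 4*T - 2*T/2^k ≤ σ - 2*δ := by
        have h3 : 2*T/2^(k+1) = T/2^k := by rw [pow_succ]; field_simp
        rw [hkey]
        rw [h3] at hσlow
        have h4 : T/2^k ≤ 2*T/2^k := (div_le_div_iff_of_pos_right hpk).2 (by linarith)
        have h5 : 2*T/2^k = 2*(T/2^k) := by ring
        linarith
      have hb2pos : 0 < σ - 2*δ := by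
        linarith [hs2, hd2T', hTpos]
      -- apply hstep with constant g
      have hgint : IntegrableOn (fun _ : ℝ => κ₀ * d k ^ p) (Ioc (σ-2*δ) (σ-δ)) :=
        integrableOn_const (C := κ₀ * d k ^ p) measure_Ioc_lt_top.ne
      have hbound : ∀ ς ∈ Ioc (σ-2*δ) (σ-δ),
          κ₀ * d k ^ p ≤ ∫ y, Γ x y (σ - ς) * u ς y ^ p := by
        intro ς hς
        have hς0 : 0 < ς := by linarith [hς.1, hb2pos]
        have hflow := hFlow x σ ς δ (2*δ) (d k) hς0.le (by linarith [hς.2]) hδpos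
          (by linarith [hς.2]) (by linarith [hς.1]) (hdpos k).le
          (le_trans hx (hr_mono hδpos.le (by linarith [hς.2])))
          (fun y hy => ih ς ⟨by linarith [hς.1, hs2], by linarith [hς.2, hσ.2]⟩ y
            (le_trans hy (hr_mono hδpos.le (by rw [← hkey]; linarith))))
        refine le_trans (le_of_eq ?_) hflow
        have e1 : (2*δ)^(-a) = 2^(-a) * δ^(-a) := Real.mul_rpow (by norm_num) hδpos.le
        have e2 : δ^(-a) * δ^a = 1 := by
          rw [← Real.rpow_add hδpos]; simp
        calc κ₀ * d k ^ p = (CαN⁻¹ * 2^(-a) * v₁) * (δ^(-a) * δ^a) * d k ^ p := by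
              rw [e2, hκ₀_def]; ring
          _ = CαN⁻¹ * (2*δ) ^ (-a) * (v₁ * (δ ^ a * d k ^ p)) := by rw [e1]; ring
      have hkey2 := hstep x σ (σ-2*δ) (σ-δ) hσpos hb2pos (by linarith) (by linarith)
        (fun _ => κ₀ * d k ^ p) hgint hbound
      rw [setIntegral_const, measureReal_def, Real.volume_Ioc, ENNReal.toReal_ofReal (by linarith),
        smul_eq_mul] at hkey2
      refine le_trans (le_of_eq ?_) hkey2
      rw [hdsucc k, ← hδ_def]
      ring
  -- growth and contradiction
  have hrec' : ∀ k : ℕ, d (k+1) = (κ₀*T) / 2^(k+1) * d k ^ p := by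
    intro k; rw [hdsucc]; ring
  have hd0' : ((2:ℝ)^(p/(p-1))/(κ₀*T))^((1:ℝ)/(p-1)) ≤ d 0 := by
    have hθκ : (0:ℝ) < (2:ℝ)^(p/(p-1))/κ₀ :=
      div_pos (Real.rpow_pos_of_pos two_pos _) hκ₀pos
    have e1 : ((2:ℝ)^(p/(p-1))/(κ₀*T))^((1:ℝ)/(p-1)) = Λ₀ * T^(-((1:ℝ)/(p-1))) := by
      rw [div_mul_eq_div_div, div_eq_mul_inv ((2:ℝ)^(p/(p-1))/κ₀) T,
        Real.mul_rpow hθκ.le (inv_nonneg.2 hTpos.le), Real.inv_rpow hTpos.le,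
        ← Real.rpow_neg hTpos.le, hΛ₀_def]
    rw [e1, hd0, hd₀_def]
    have h4a : (4:ℝ)^(-a) * 4^a = 1 := by
      rw [← Real.rpow_add (by norm_num : (0:ℝ) < 4)]; simp
    have e2 : (4*T)^(-a) = 4^(-a) * T^(-a) := Real.mul_rpow (by norm_num) hTpos.le
    have e3 : K₁ * (4*T)^(-a) * (Λ₀ * K₁⁻¹ * 4^a) = Λ₀ * T^(-a) := by
      rw [e2, show K₁ * (4^(-a) * T^(-a)) * (Λ₀ * K₁⁻¹ * 4^a)
        = Λ₀ * T^(-a) * ((K₁ * K₁⁻¹) * (4^(-a) * 4^a)) by ring,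
        mul_inv_cancel₀ hK₁pos.ne', h4a, one_mul, mul_one]
    calc Λ₀ * T^(-((1:ℝ)/(p-1))) ≤ Λ₀ * T^(-a) :=
          mul_le_mul_of_nonneg_left
            (Real.rpow_le_rpow_of_exponent_le hT1 (by linarith [hainv])) hΛ₀pos.le
      _ = K₁ * (4*T)^(-a) * (Λ₀ * K₁⁻¹ * 4^a) := e3.symm
      _ ≤ K₁ * (4*T)^(-a) * C := mul_le_mul_of_nonneg_left hCΛ (by positivity)
  have hgrow := aux_growth p (κ₀*T) hp1 (by positivity) d hd0' hrec'
  set G : ℝ := ((2:ℝ)^(p/(p-1))/(κ₀*T))^((1:ℝ)/(p-1)) with hG_def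
  have hGpos : 0 < G :=
    Real.rpow_pos_of_pos (div_pos (Real.rpow_pos_of_pos two_pos _) (mul_pos hκ₀pos hTpos)) _
  set H : ℝ := (2:ℝ)^((1:ℝ)/(p-1)) with hH_def
  have hH1 : 1 < H := by
    rw [hH_def]
    exact (Real.one_lt_rpow_iff_of_pos two_pos).2 (Or.inl ⟨one_lt_two, div_pos one_pos (by linarith)⟩)
  obtain ⟨k, hk⟩ := pow_unbounded_of_one_lt (u (7*T) 0 / G) hH1
  have hmem : (7*T) ∈ Icc (4*T - 2*T/2^k) (7*T) := by
    constructor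
    · have : (0:ℝ) ≤ 2*T/2^k := by positivity
      linarith
    · exact le_refl _
  have hcontr := main k (7*T) hmem 0 (by rw [norm_zero]; positivity)
  have hlt : u (7*T) 0 < G * H^k := by
    have h1 := (div_lt_iff₀ hGpos).1 hk
    have h2 : H^k * G = G * H^k := mul_comm _ _
    linarith
  linarith [hgrow k, hcontr, hlt]
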